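/- Let (q_n)_{n≥0} satisfy q_0 = 1, q_n > 0, q_{n+1}/q_n ≥ q_n/q_{n−1} for n ≥ 1, and q_n/Q_n → 0 where Q_n = ∑_{k=0}^{n} q_k; let (γ_n) be defined by γ_0 = 1 and ∑_{k=0}^{n} q_{n−k} γ_k = 0 for n ≥ 1. Let (α_n) with α_n ∈ (0,1) satisfy q_m/q_{m−1} ≤ 1 − (1−α_n)/m for all m,n ≥ 1. If S = (s_n) is a sequence of real numbers with N_n^{(q)}(S) → s as n → ∞, then σ_n^{α_n}(S) → s as n → ∞. -/

import Mathlib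

open Finset Filter

/-- `A_n^α = (1+α)(2+α)⋯(n+α)/n!`, with `A_0^α = 1`. -/
noncomputable def cesA (n : ℕ) (α : ℝ) : ℝ :=
  (∏ i ∈ Finset.range n, ((i : ℝ) + 1 + α)) / (n.factorial : ℝ)

/-- The `(C, α_n)` means with varying parameters. -/
noncomputable def cesaroVar (α : ℕ → ℝ) (s : ℕ → ℝ) (n : ℕ) : ℝ :=
  (1 / cesA n (α n)) * ∑ j ∈ Finset.range (n + 1), cesA (n - j) (α n - 1) * s j

/-- `Q_n = ∑_{k=0}^n q_k`. -/
noncomputable def bigQ (q : ℕ → ℝ) (n : ℕ) : ℝ := ∑ k ∈ Finset.range (n + 1), q k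

/-- The Nörlund means `N_n^{(q)}(S) = (1/Q_n) ∑_{k=0}^{n} q_{n-k} s_k`. -/
noncomputable def norlund (q : ℕ → ℝ) (s : ℕ → ℝ) (n : ℕ) : ℝ :=
  (1 / bigQ q n) * ∑ k ∈ Finset.range (n + 1), q (n - k) * s k

section Aux

lemma cesA_zero' (α : ℝ) : cesA 0 α = 1 := by simp [cesA]

lemma cesA_succ (n : ℕ) (α : ℝ) :
    cesA (n+1) α = cesA n α * ((n+1+α)/(n+1)) := by
  have h1 : ((n+1 : ℕ).factorial : ℝ) = (n.factorial : ℝ) * (n+1) := by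
    rw [Nat.factorial_succ]; push_cast; ring
  have h2 : (n.factorial : ℝ) ≠ 0 := by positivity
  simp only [cesA, Finset.prod_range_succ, h1]
  push_cast
  field_simp

lemma cesA_pos {α : ℝ} (h : -1 < α) (n : ℕ) : 0 < cesA n α := by
  apply div_pos
  · exact Finset.prod_pos fun i _ => by
      have : (0:ℝ) ≤ (i:ℝ) := Nat.cast_nonneg i
      linarith
  · exact_mod_cast Nat.factorial_pos n

lemma cesA_succ' (n : ℕ) (α : ℝ) :
    cesA (n+1) (α-1) = cesA n α * α / (n+1) := by
  have h1 : ((n+1 : ℕ).factorial : ℝ) = (n.factorial : ℝ) * (n+1) := by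
    rw [Nat.factorial_succ]; push_cast; ring
  have h2 : (n.factorial : ℝ) ≠ 0 := by positivity
  have h3 : ∏ i ∈ Finset.range (n+1), ((i:ℝ) + 1 + (α-1))
      = α * ∏ i ∈ Finset.range n, ((i:ℝ) + 1 + α) := by
    rw [Finset.prod_range_succ', mul_comm]
    congr 1
    · push_cast; ring
    · exact Finset.prod_congr rfl fun i _ => by push_cast; ring
  simp only [cesA, h3, h1]
  field_simp

lemma sum_cesA (n : ℕ) (α : ℝ) :
    ∑ j ∈ Finset.range (n+1), cesA j (α-1) = cesA n α := by
  induction n with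
  | zero => simp [cesA]
  | succ n ih =>
      rw [Finset.sum_range_succ, ih, cesA_succ', cesA_succ]
      have : ((n:ℝ)+1) ≠ 0 := by positivity
      field_simp

lemma cesA_antitone {β : ℝ} (hβ1 : β ≤ 1) (hβ0 : 0 < β) :
    Antitone (fun a : ℕ => cesA a (β-1)) := by
  apply antitone_nat_of_succ_le
  intro a
  rw [cesA_succ]
  apply mul_le_of_le_one_right (le_of_lt (cesA_pos (by linarith) a))
  rw [div_le_one (by positivity)]
  linarith

lemma cesA_mul_mono {β : ℝ} (hβ0 : 0 < β) (hβ1 : β ≤ 1) :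
    Monotone (fun a : ℕ => (a:ℝ) * cesA a (β-1)) := by
  apply monotone_nat_of_le_succ
  intro a
  have hpos := cesA_pos (show (-1:ℝ) < β - 1 by linarith) a
  have : ((a+1:ℕ):ℝ) * cesA (a+1) (β-1) = cesA a (β-1) * ((a:ℝ)+β) := by
    rw [cesA_succ]
    push_cast
    have : ((a:ℝ)+1) ≠ 0 := by positivity
    field_simp
    ring
  rw [this]
  nlinarith

lemma cesA_le_of_mul {β : ℝ} (hβ0 : 0 < β) (hβ1 : β ≤ 1) (n : ℕ) :
    ((n:ℝ)+1) * cesA n (β-1) ≤ cesA n β := by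
  rw [← sum_cesA n β]
  have h1 : ((n:ℝ)+1) * cesA n (β-1) = ∑ _j ∈ Finset.range (n+1), cesA n (β-1) := by
    rw [Finset.sum_const, Finset.card_range]
    push_cast
    ring
  rw [h1]
  apply Finset.sum_le_sum
  intro j hj
  rw [Finset.mem_range] at hj
  exact cesA_antitone hβ1 hβ0 (by omega)

lemma kaluza (q : ℕ → ℝ) (hq0 : q 0 = 1) (hqpos : ∀ m, 0 < q m)
    (hR : ∀ i : ℕ, q (i+1) / q i ≤ q (i+2) / q (i+1))
    (γ : ℕ → ℝ) (hγ0 : γ 0 = 1)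
    (hγ : ∀ m, 1 ≤ m → ∑ k ∈ Finset.range (m + 1), q (m - k) * γ k = 0) :
    ∀ m, 1 ≤ m → γ m ≤ 0 := by
  have hRmono : Monotone (fun i => q (i+1) / q i) :=
    monotone_nat_of_le_succ fun i => hR i
  intro m
  induction m using Nat.strong_induction_on with
  | _ m ih =>
    intro hm1
    rcases Nat.lt_or_ge m 2 with hm2 | hm2
    · interval_cases m
      have h1 := hγ 1 le_rfl
      simp [Finset.sum_range_succ, hq0, hγ0] at h1
      nlinarith [hqpos 1]
    · set r := q m / q (m-1) with hr
      have hqm1 : (0:ℝ) < q (m-1) := hqpos _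
      have key : γ m = ∑ k ∈ Finset.range m, (r * q (m-1-k) - q (m-k)) * γ k := by
        have h1 := hγ m hm1
        have h2 := hγ (m-1) (by omega)
        rw [Finset.sum_range_succ] at h1
        have h2' : ∑ k ∈ Finset.range m, q (m-1-k) * γ k = 0 := by
          have : m - 1 + 1 = m := by omega
          rwa [this] at h2
        have : q (m - m) * γ m = γ m := by simp [hq0]
        rw [this] at h1
        have : γ m = - ∑ k ∈ Finset.range m, q (m-k) * γ k := by linarith
        rw [this]
        have expand : ∑ k ∈ Finset.range m, (r * q (m-1-k) - q (m-k)) * γ k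
            = r * (∑ k ∈ Finset.range m, q (m-1-k) * γ k)
              - ∑ k ∈ Finset.range m, q (m-k) * γ k := by
          rw [Finset.mul_sum, ← Finset.sum_sub_distrib]
          exact Finset.sum_congr rfl fun k _ => by ring
        rw [expand, h2']
        ring
      rw [key]
      apply Finset.sum_nonpos
      intro k hk
      rw [Finset.mem_range] at hk
      rcases Nat.eq_zero_or_pos k with hk0 | hk1
      · subst hk0
        have hz : r * q (m-1) - q m = 0 := by
          rw [hr]; field_simp; ring
        simp [hz, hγ0]
      · have hγk : γ k ≤ 0 := ih k hk hk1
        have hcoef : 0 ≤ r * q (m-1-k) - q (m-k) := by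
          have ha : m - k = (m-1-k) + 1 := by omega
          have hmono : q ((m-1-k)+1) / q (m-1-k) ≤ q ((m-2)+1+1) / q ((m-2)+1) := by
            have := hRmono (show m-1-k ≤ (m-2)+1 by omega)
            simpa using this
          have hd : q ((m-2)+1+1) = q m := by congr 1; omega
          have he : q ((m-2)+1) = q (m-1) := by congr 1; omega
          rw [hd, he] at hmono
          have hq2 : (0:ℝ) < q (m-1-k) := hqpos _
          rw [div_le_div_iff₀ hq2 hqm1] at hmono
          rw [← ha] at hmono
          rw [hr, sub_nonneg, div_mul_eq_mul_div, le_div_iff₀ hqm1]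
          linarith
        exact mul_nonpos_of_nonneg_of_nonpos hcoef hγk

lemma coeff_mul_range (φ ψ : PowerSeries ℝ) (n : ℕ) :
    (PowerSeries.coeff (R := ℝ) n) (φ * ψ)
      = ∑ k ∈ Finset.range (n+1), (PowerSeries.coeff (R := ℝ) (n-k)) φ * (PowerSeries.coeff (R := ℝ) k) ψ := by
  rw [PowerSeries.coeff_mul, Finset.Nat.sum_antidiagonal_eq_sum_range_succ_mk]
  rw [← Finset.sum_range_reflect]
  apply Finset.sum_congr rfl
  intro j hj
  rw [Finset.mem_range] at hj
  have h1 : n + 1 - 1 - j = n - j := by omega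
  have h2 : n - (n - j) = j := by omega
  simp [h1, h2]

lemma conv_id (a q γ f : ℕ → ℝ)
    (hinv : ∀ n, (∑ k ∈ Finset.range (n+1), q (n-k) * γ k) = if n = 0 then 1 else 0)
    (n : ℕ) :
    ∑ j ∈ Finset.range (n+1), a (n-j) * f j
      = ∑ k ∈ Finset.range (n+1),
          (∑ j ∈ Finset.range (n-k+1), a (n-k-j) * γ j)
            * (∑ j ∈ Finset.range (k+1), q (k-j) * f j) := by
  have cmk : ∀ (u v : ℕ → ℝ) (m : ℕ),
      (PowerSeries.coeff (R := ℝ) m) (PowerSeries.mk u * PowerSeries.mk v)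
        = ∑ k ∈ Finset.range (m+1), u (m-k) * v k := by
    intro u v m
    rw [coeff_mul_range]
    simp
  have h1 : PowerSeries.mk q * PowerSeries.mk γ = 1 := by
    ext m
    rw [cmk, hinv m, PowerSeries.coeff_one]
  have h2 : PowerSeries.mk a * PowerSeries.mk f
      = (PowerSeries.mk a * PowerSeries.mk γ) * (PowerSeries.mk q * PowerSeries.mk f) := by
    rw [show (PowerSeries.mk a * PowerSeries.mk γ) * (PowerSeries.mk q * PowerSeries.mk f)
        = (PowerSeries.mk a * PowerSeries.mk f) * (PowerSeries.mk q * PowerSeries.mk γ) by ring,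
      h1, mul_one]
  have h3 := congrArg (PowerSeries.coeff (R := ℝ) n) h2
  rw [cmk, coeff_mul_range] at h3
  rw [h3]
  apply Finset.sum_congr rfl
  intro k _
  rw [cmk, cmk]

lemma toeplitz {w : ℕ → ℕ → ℝ} {t : ℕ → ℝ} {l : ℝ}
    (hw0 : ∀ n k, k ≤ n → 0 ≤ w n k)
    (hw1 : ∀ n, ∑ k ∈ Finset.range (n+1), w n k = 1)
    (hcol : ∀ k, Tendsto (fun n => w n k) atTop (nhds 0))
    (ht : Tendsto t atTop (nhds l)) :
    Tendsto (fun n => ∑ k ∈ Finset.range (n+1), w n k * t k) atTop (nhds l) := by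
  have hdecomp : ∀ n, ∑ k ∈ Finset.range (n+1), w n k * t k
      = l + ∑ k ∈ Finset.range (n+1), w n k * (t k - l) := by
    intro n
    have : ∑ k ∈ Finset.range (n+1), w n k * (t k - l)
        = ∑ k ∈ Finset.range (n+1), w n k * t k - (∑ k ∈ Finset.range (n+1), w n k) * l := by
      rw [Finset.sum_mul, ← Finset.sum_sub_distrib]
      exact Finset.sum_congr rfl fun k _ => by ring
    rw [this, hw1]
    ring
  simp only [hdecomp]
  have main : Tendsto (fun n => ∑ k ∈ Finset.range (n+1), w n k * (t k - l)) atTop (nhds 0) := by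
    rw [NormedAddCommGroup.tendsto_nhds_zero]
    intro ε hε
    have htt : ∀ᶠ k in atTop, |t k - l| ≤ ε/4 := by
      have := Metric.tendsto_atTop.mp ht (ε/4) (by positivity)
      obtain ⟨K, hK⟩ := this
      filter_upwards [eventually_ge_atTop K] with k hk
      have := hK k hk
      rw [Real.dist_eq] at this
      linarith
    obtain ⟨K, hK⟩ := eventually_atTop.mp htt
    have hg : Tendsto (fun n => ∑ k ∈ Finset.range K, w n k * |t k - l|) atTop (nhds 0) := by
      have : (0:ℝ) = ∑ k ∈ Finset.range K, (0:ℝ) := by simp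
      rw [this]
      apply tendsto_finset_sum
      intro k _
      simpa using (hcol k).mul_const |t k - l|
    have hgev : ∀ᶠ n in atTop, ∑ k ∈ Finset.range K, w n k * |t k - l| < ε/2 := by
      have := Metric.tendsto_atTop.mp hg (ε/2) (by positivity)
      obtain ⟨N, hN⟩ := this
      filter_upwards [eventually_ge_atTop N] with n hn
      have := hN n hn
      rw [Real.dist_eq, sub_zero] at this
      calc ∑ k ∈ Finset.range K, w n k * |t k - l|
          ≤ abs (∑ k ∈ Finset.range K, w n k * |t k - l|) := le_abs_self _
        _ < ε/2 := this
    filter_upwards [hgev, eventually_ge_atTop K] with n hgn hnK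
    have habs : ‖∑ k ∈ Finset.range (n+1), w n k * (t k - l)‖
        ≤ ∑ k ∈ Finset.range (n+1), w n k * |t k - l| := by
      calc ‖∑ k ∈ Finset.range (n+1), w n k * (t k - l)‖
          ≤ ∑ k ∈ Finset.range (n+1), ‖w n k * (t k - l)‖ := norm_sum_le _ _
        _ = ∑ k ∈ Finset.range (n+1), w n k * |t k - l| := by
            apply Finset.sum_congr rfl
            intro k hk
            rw [Finset.mem_range] at hk
            rw [Real.norm_eq_abs, abs_mul, abs_of_nonneg (hw0 n k (by omega))]
    have hsplit : ∑ k ∈ Finset.range (n+1), w n k * |t k - l|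
        = ∑ k ∈ Finset.range K, w n k * |t k - l|
          + ∑ k ∈ Finset.Ico K (n+1), w n k * |t k - l| := by
      rw [Finset.range_eq_Ico, ← Finset.sum_Ico_consecutive _ (Nat.zero_le K) (by omega),
        ← Finset.range_eq_Ico]
    have htail : ∑ k ∈ Finset.Ico K (n+1), w n k * |t k - l| ≤ ε/4 := by
      calc ∑ k ∈ Finset.Ico K (n+1), w n k * |t k - l|
          ≤ ∑ k ∈ Finset.Ico K (n+1), w n k * (ε/4) := by
            apply Finset.sum_le_sum
            intro k hk
            rw [Finset.mem_Ico] at hk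
            exact mul_le_mul_of_nonneg_left (hK k hk.1) (hw0 n k (by omega))
        _ = (∑ k ∈ Finset.Ico K (n+1), w n k) * (ε/4) := by rw [Finset.sum_mul]
        _ ≤ 1 * (ε/4) := by
            apply mul_le_mul_of_nonneg_right _ (by positivity)
            rw [← hw1 n]
            apply Finset.sum_le_sum_of_subset_of_nonneg
            · rw [Finset.range_eq_Ico]
              exact Finset.Ico_subset_Ico (Nat.zero_le K) le_rfl
            · intro k hk _
              rw [Finset.mem_range] at hk
              exact hw0 n k (by omega)
        _ = ε/4 := one_mul _
    calc ‖∑ k ∈ Finset.range (n+1), w n k * (t k - l)‖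
        ≤ ∑ k ∈ Finset.range (n+1), w n k * |t k - l| := habs
      _ = ∑ k ∈ Finset.range K, w n k * |t k - l|
            + ∑ k ∈ Finset.Ico K (n+1), w n k * |t k - l| := hsplit
      _ < ε/2 + ε/4 := by linarith
      _ < ε := by linarith
  have := main.const_add l
  simpa using this

end Aux

/-- Under Hardy's conditions on `(q_n)` and the compatibility condition
`q_m/q_{m-1} ≤ 1 - (1-α_n)/m` with `α_n ∈ (0,1)`, convergence of the Nörlund means
`N_n^{(q)}(S) → s` implies convergence of the `(C,α_n)` means `σ_n^{α_n}(S) → s`. -/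
theorem cesaroVar_tendsto_of_norlund_tendsto
    (q : ℕ → ℝ) (hq0 : q 0 = 1) (hqpos : ∀ m, 0 < q m)
    (hqconv : ∀ m, 1 ≤ m → q m / q (m - 1) ≤ q (m + 1) / q m)
    (hqQ : Filter.Tendsto (fun m => q m / bigQ q m) Filter.atTop (nhds 0))
    (γ : ℕ → ℝ) (hγ0 : γ 0 = 1)
    (hγ : ∀ m, 1 ≤ m → ∑ k ∈ Finset.range (m + 1), q (m - k) * γ k = 0)
    (α : ℕ → ℝ) (hα : ∀ n, α n ∈ Set.Ioo (0 : ℝ) 1)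
    (hcond : ∀ m n : ℕ, 1 ≤ m → q m / q (m - 1) ≤ 1 - (1 - α n) / m)
    (s : ℕ → ℝ) (l : ℝ)
    (h : Filter.Tendsto (norlund q s) Filter.atTop (nhds l)) :
    Filter.Tendsto (cesaroVar α s) Filter.atTop (nhds l) := by
  -- basic positivity
  have hβ0 : ∀ n, 0 < α n := fun n => (hα n).1
  have hβ1 : ∀ n, α n < 1 := fun n => (hα n).2
  have hApos : ∀ n, 0 < cesA n (α n) := fun n => cesA_pos (by linarith [hβ0 n]) n
  have hA1pos : ∀ n p, 0 < cesA p (α n - 1) := fun n p => cesA_pos (by linarith [hβ0 n]) p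
  have hQpos : ∀ k, 0 < bigQ q k := by
    intro k
    exact Finset.sum_pos (fun i _ => hqpos i) ⟨0, Finset.mem_range.mpr (by omega)⟩
  have hinv : ∀ m, (∑ k ∈ Finset.range (m+1), q (m-k) * γ k) = if m = 0 then 1 else 0 := by
    intro m
    rcases Nat.eq_zero_or_pos m with hm | hm
    · subst hm; simp [hq0, hγ0]
    · rw [if_neg (by omega)]; exact hγ m hm
  have hγneg : ∀ m, 1 ≤ m → γ m ≤ 0 := by
    apply kaluza q hq0 hqpos _ γ hγ0 hγ
    intro i
    have := hqconv (i+1) (by omega)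
    simpa using this
  -- the transformed kernel
  set D : ℕ → ℕ → ℝ :=
    fun n p => ∑ j ∈ Finset.range (p+1), cesA (p-j) (α n - 1) * γ j with hDdef
  set w : ℕ → ℕ → ℝ := fun n k => D n (n-k) * bigQ q k / cesA n (α n) with hwdef
  -- monotonicity of cesA/q
  have hAq : ∀ n, Monotone (fun a : ℕ => cesA a (α n - 1) / q a) := by
    intro n
    apply monotone_nat_of_le_succ
    intro a
    have h1 : cesA (a+1) (α n - 1) = cesA a (α n - 1) * (((a:ℝ)+α n)/((a:ℝ)+1)) := by
      rw [cesA_succ]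
      ring_nf
    have h2 := hcond (a+1) n (by omega)
    simp only [Nat.add_sub_cancel] at h2
    have h3 : (1:ℝ) - (1 - α n)/((a:ℝ)+1) = ((a:ℝ)+α n)/((a:ℝ)+1) := by
      have : ((a:ℝ)+1) ≠ 0 := by positivity
      field_simp
      ring
    rw [Nat.cast_add, Nat.cast_one] at h2
    rw [h3] at h2
    have hqa := hqpos a
    have hqa1 := hqpos (a+1)
    rw [div_le_div_iff₀ hqa hqa1]
    have h4 : q (a+1) ≤ ((a:ℝ)+α n)/((a:ℝ)+1) * q a := by
      rw [div_le_iff₀ hqa] at h2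
      linarith
    calc cesA a (α n - 1) * q (a+1)
        ≤ cesA a (α n - 1) * (((a:ℝ)+α n)/((a:ℝ)+1) * q a) :=
          mul_le_mul_of_nonneg_left h4 (le_of_lt (hA1pos n a))
      _ = cesA (a+1) (α n - 1) * q a := by rw [h1]; ring
  -- bounds on D
  have hsumq_neg : ∀ p, 1 ≤ p →
      ∑ i ∈ Finset.range p, q (p-(i+1)) * γ (i+1) = - q p := by
    intro p hp
    have := hγ p hp
    rw [Finset.sum_range_succ'] at this
    simp only [Nat.sub_zero, hγ0, mul_one] at this
    linarith
  have hDsplit : ∀ n p, D n p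
      = (∑ i ∈ Finset.range p, cesA (p-(i+1)) (α n - 1) * γ (i+1)) + cesA p (α n - 1) := by
    intro n p
    simp only [hDdef]
    rw [Finset.sum_range_succ']
    simp [hγ0]
  have hDle : ∀ n p, D n p ≤ cesA p (α n - 1) := by
    intro n p
    rw [hDsplit]
    have : ∑ i ∈ Finset.range p, cesA (p-(i+1)) (α n - 1) * γ (i+1) ≤ 0 := by
      apply Finset.sum_nonpos
      intro i hi
      exact mul_nonpos_of_nonneg_of_nonpos (le_of_lt (hA1pos n _)) (hγneg (i+1) (by omega))
    linarith
  have hDpos : ∀ n p, 0 ≤ D n p := by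
    intro n p
    rcases Nat.eq_zero_or_pos p with hp | hp
    · subst hp
      rw [hDsplit]
      simp [cesA_zero']
    · rw [hDsplit]
      have hqp := hqpos p
      have key : ∑ i ∈ Finset.range p, cesA (p-(i+1)) (α n - 1) * γ (i+1)
          ≥ ∑ i ∈ Finset.range p,
              (cesA p (α n - 1) / q p) * (q (p-(i+1)) * γ (i+1)) := by
        apply Finset.sum_le_sum
        intro i hi
        have hc : cesA (p-(i+1)) (α n - 1) ≤ (cesA p (α n - 1) / q p) * q (p-(i+1)) := by
          have := hAq n (show p-(i+1) ≤ p by omega)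
          have hq2 := hqpos (p-(i+1))
          rw [div_le_div_iff₀ hq2 hqp] at this
          rw [div_mul_eq_mul_div, le_div_iff₀ hqp]
          linarith
        have hγi : γ (i+1) ≤ 0 := hγneg (i+1) (by omega)
        calc (cesA p (α n - 1) / q p) * (q (p-(i+1)) * γ (i+1))
            = ((cesA p (α n - 1) / q p) * q (p-(i+1))) * γ (i+1) := by ring
          _ ≤ cesA (p-(i+1)) (α n - 1) * γ (i+1) :=
              mul_le_mul_of_nonpos_right hc hγi
      have hsum : ∑ i ∈ Finset.range p,
          (cesA p (α n - 1) / q p) * (q (p-(i+1)) * γ (i+1))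
          = - cesA p (α n - 1) := by
        rw [← Finset.mul_sum, hsumq_neg p hp]
        field_simp
      rw [hsum] at key
      linarith
  -- the key identity
  have hsumq : ∀ (f : ℕ → ℝ) k,
      ∑ j ∈ Finset.range (k+1), q (k-j) * f j = bigQ q k * norlund q f k := by
    intro f k
    rw [norlund]
    have := ne_of_gt (hQpos k)
    field_simp
  have hkey : ∀ (f : ℕ → ℝ) (n : ℕ),
      ∑ j ∈ Finset.range (n+1), cesA (n-j) (α n - 1) * f j
        = ∑ k ∈ Finset.range (n+1), D n (n-k) * (bigQ q k * norlund q f k) := by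
    intro f n
    rw [conv_id (fun p => cesA p (α n - 1)) q γ f hinv n]
    apply Finset.sum_congr rfl
    intro k _
    rw [hsumq f k]
  have hnorlund_one : ∀ k, norlund q (fun _ => 1) k = 1 := by
    intro k
    rw [norlund]
    have h1 : ∑ j ∈ Finset.range (k+1), q (k-j) * 1 = bigQ q k := by
      simp only [mul_one, bigQ]
      rw [← Finset.sum_range_reflect]
      apply Finset.sum_congr rfl
      intro j hj
      congr 1
      rw [Finset.mem_range] at hj
      omega
    rw [h1, one_div, inv_mul_cancel₀ (ne_of_gt (hQpos k))]
  -- row sums are 1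
  have hDQ : ∀ n, ∑ k ∈ Finset.range (n+1), D n (n-k) * bigQ q k = cesA n (α n) := by
    intro n
    have := hkey (fun _ => 1) n
    simp only [hnorlund_one, mul_one] at this
    rw [← this]
    rw [← Finset.sum_range_reflect]
    rw [← sum_cesA n (α n)]
    apply Finset.sum_congr rfl
    intro j hj
    rw [Finset.mem_range] at hj
    congr 2
    omega
  have hrow : ∀ n, ∑ k ∈ Finset.range (n+1), w n k = 1 := by
    intro n
    rw [hwdef]
    simp only
    rw [← Finset.sum_div, hDQ n, div_self (ne_of_gt (hApos n))]
  have hw0 : ∀ n k, k ≤ n → 0 ≤ w n k := by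
    intro n k _
    rw [hwdef]
    exact div_nonneg (mul_nonneg (hDpos n _) (le_of_lt (hQpos k))) (le_of_lt (hApos n))
  -- cesaroVar as a kernel transform of the Norlund means
  have hσ : ∀ n, cesaroVar α s n = ∑ k ∈ Finset.range (n+1), w n k * norlund q s k := by
    intro n
    rw [cesaroVar, hkey s n, Finset.mul_sum]
    apply Finset.sum_congr rfl
    intro k _
    rw [hwdef]
    simp only
    field_simp
  -- columns tend to 0
  have hcol : ∀ k, Tendsto (fun n => w n k) atTop (nhds 0) := by
    intro k
    have hbound : Tendsto (fun n : ℕ => 2 * bigQ q k / ((n:ℝ)+1)) atTop (nhds 0) := by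
      apply Tendsto.div_atTop (tendsto_const_nhds)
      exact tendsto_atTop_add_const_right atTop 1 tendsto_natCast_atTop_atTop
    apply squeeze_zero'
    · filter_upwards with n
      exact div_nonneg (mul_nonneg (hDpos n _) (le_of_lt (hQpos k))) (le_of_lt (hApos n))
    · filter_upwards [eventually_ge_atTop (2*k+2)] with n hn
      have hk1 : (1:ℝ) ≤ ((n-k : ℕ):ℝ) := by
        have : 1 ≤ n - k := by omega
        exact_mod_cast this
      have hk2 : (n:ℝ) ≤ 2 * ((n-k : ℕ):ℝ) := by
        have : n ≤ 2 * (n - k) := by omega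
        exact_mod_cast this
      have f1 : D n (n-k) ≤ cesA (n-k) (α n - 1) := hDle n (n-k)
      have f2 : ((n-k : ℕ):ℝ) * cesA (n-k) (α n - 1) ≤ (n:ℝ) * cesA n (α n - 1) :=
        cesA_mul_mono (hβ0 n) (le_of_lt (hβ1 n)) (Nat.sub_le n k)
      have f3 : ((n:ℝ)+1) * cesA n (α n - 1) ≤ cesA n (α n) :=
        cesA_le_of_mul (hβ0 n) (le_of_lt (hβ1 n)) n
      have f4 : 0 < cesA (n-k) (α n - 1) := hA1pos n (n-k)
      have f5 : 0 < cesA n (α n - 1) := hA1pos n n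
      have f6 : 0 ≤ D n (n-k) := hDpos n (n-k)
      have stepa : cesA (n-k) (α n - 1) ≤ 2 * cesA n (α n - 1) := by
        nlinarith [mul_le_mul_of_nonneg_right hk2 (le_of_lt f5)]
      have stepb : D n (n-k) * ((n:ℝ)+1) ≤ 2 * cesA n (α n) := by
        have hn1 : (0:ℝ) < (n:ℝ)+1 := by positivity
        nlinarith
      show D n (n-k) * bigQ q k / cesA n (α n) ≤ 2 * bigQ q k / ((n:ℝ)+1)
      rw [div_le_div_iff₀ (hApos n) (by positivity)]
      have hQk := hQpos k
      nlinarith [mul_le_mul_of_nonneg_right stepb (le_of_lt hQk)]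
    · exact hbound
  rw [show cesaroVar α s = fun n => cesaroVar α s n from rfl]
  simp only [hσ]
  exact toeplitz hw0 hrow hcol h
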